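/- Let $a_1, \ldots, a_d > 0$ with $\sum_{j=1}^d \frac{1}{a_j^2} \leq 1$. Then for every $d$-tuple $X_1, \ldots, X_d$ of self-adjoint operators on a Hilbert space $H$ with $\|X_j\| \leq 1$ for all $j$, there exist commuting self-adjoint operators $N_1, \ldots, N_d$ on $H \otimes \mathbb{C}^{4^{d-1}}$ with $\|N_j\| \leq a_j$ and an isometry $V : H \to H \otimes \mathbb{C}^{4^{d-1}}$ such that $X_j = V^* N_j V$ for all $j$. -/

import Mathlib

set_option synthInstance.maxHeartbeats 1000000
set_option maxHeartbeats 1000000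

noncomputable instance piLpCompleteSpace'
    {H : Type*} [NormedAddCommGroup H] [InnerProductSpace ℂ H] [CompleteSpace H]
    (n : ℕ) : CompleteSpace (PiLp 2 (fun _ : Fin n => H)) :=
  inferInstance

section Aux

open scoped InnerProductSpace
open ContinuousLinearMap



private lemma le_of_sq_le_sq' {x y : ℝ} (hx : 0 ≤ x) (hy : 0 ≤ y) (h : x ^ 2 ≤ y ^ 2) :
    x ≤ y := by nlinarith

private lemma eq_of_sq_eq_sq' {x y : ℝ} (hx : 0 ≤ x) (hy : 0 ≤ y) (h : x ^ 2 = y ^ 2) :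
    x = y := le_antisymm (le_of_sq_le_sq' hx hy h.le) (le_of_sq_le_sq' hy hx h.ge)

variable {H : Type*} [NormedAddCommGroup H] [InnerProductSpace ℂ H] [CompleteSpace H] {m : ℕ}

/-- block diagonal linear map -/
noncomputable def bdLM (D : Fin m → H →L[ℂ] H) :
    PiLp 2 (fun _ : Fin m => H) →ₗ[ℂ] PiLp 2 (fun _ : Fin m => H) where
  toFun x := WithLp.toLp 2 (fun i => D i (x i))
  map_add' x y := PiLp.ext fun i => map_add _ _ _
  map_smul' c x := PiLp.ext fun i => map_smul (D i) c (x i)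

omit [CompleteSpace H] in
lemma bd_norm_le (D : Fin m → H →L[ℂ] H) {C : ℝ} (hC : 0 ≤ C) (h : ∀ i, ‖D i‖ ≤ C)
    (x : PiLp 2 (fun _ : Fin m => H)) : ‖bdLM D x‖ ≤ C * ‖x‖ := by
  refine le_of_sq_le_sq' (norm_nonneg _) (by positivity) ?_
  rw [PiLp.norm_sq_eq_of_L2, mul_pow, PiLp.norm_sq_eq_of_L2, Finset.mul_sum]
  refine Finset.sum_le_sum fun i _ => ?_
  have h1 : ‖D i (x i)‖ ≤ C * ‖x i‖ :=
    ((D i).le_opNorm (x i)).trans (by gcongr; exact h i)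
  have h2 : ‖(bdLM D x) i‖ ^ 2 ≤ (C * ‖x i‖) ^ 2 := by
    have : (bdLM D x) i = D i (x i) := rfl
    rw [this]
    exact pow_le_pow_left₀ (norm_nonneg _) h1 2
  calc ‖(bdLM D x) i‖ ^ 2 ≤ (C * ‖x i‖) ^ 2 := h2
    _ = C ^ 2 * ‖x i‖ ^ 2 := by ring

noncomputable def bd (D : Fin m → H →L[ℂ] H) :
    PiLp 2 (fun _ : Fin m => H) →L[ℂ] PiLp 2 (fun _ : Fin m => H) :=
  LinearMap.mkContinuous (bdLM D) (∑ i, ‖D i‖)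
    (bd_norm_le D (Finset.sum_nonneg fun i _ => norm_nonneg _)
      (fun i => Finset.single_le_sum (f := fun i => ‖D i‖) (fun i _ => norm_nonneg _)
        (Finset.mem_univ i)))

@[simp] lemma bd_apply (D : Fin m → H →L[ℂ] H) (x : PiLp 2 (fun _ : Fin m => H)) (i : Fin m) :
    bd D x i = D i (x i) := rfl

lemma bd_opNorm_le (D : Fin m → H →L[ℂ] H) {C : ℝ} (hC : 0 ≤ C) (h : ∀ i, ‖D i‖ ≤ C) :
    ‖bd D‖ ≤ C :=
  ContinuousLinearMap.opNorm_le_bound _ hC (bd_norm_le D hC h)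

lemma bd_mul (D E : Fin m → H →L[ℂ] H) : bd D * bd E = bd (fun i => D i * E i) := by
  ext x
  rfl

lemma bd_isSelfAdjoint (D : Fin m → H →L[ℂ] H) (h : ∀ i, IsSelfAdjoint (D i)) :
    IsSelfAdjoint (bd D) := by
  rw [ContinuousLinearMap.isSelfAdjoint_iff_isSymmetric]
  intro x y
  rw [PiLp.inner_apply, PiLp.inner_apply]
  exact Finset.sum_congr rfl fun i _ =>
    (ContinuousLinearMap.isSelfAdjoint_iff_isSymmetric.mp (h i)) (x i) (y i)

/-- column operator -/
noncomputable def colLM (B : Fin m → H →L[ℂ] H) :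
    H →ₗ[ℂ] PiLp 2 (fun _ : Fin m => H) where
  toFun x := WithLp.toLp 2 (fun i => B i x)
  map_add' x y := PiLp.ext fun i => map_add _ _ _
  map_smul' c x := PiLp.ext fun i => map_smul (B i) c x

omit [CompleteSpace H] in
lemma col_norm_le (B : Fin m → H →L[ℂ] H) (x : H) :
    ‖colLM B x‖ ≤ Real.sqrt (∑ i, ‖B i‖ ^ 2) * ‖x‖ := by
  have hs : (0:ℝ) ≤ ∑ i, ‖B i‖ ^ 2 := Finset.sum_nonneg fun i _ => sq_nonneg _
  refine le_of_sq_le_sq' (norm_nonneg _) (by positivity) ?_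
  rw [PiLp.norm_sq_eq_of_L2, mul_pow, Real.sq_sqrt hs, Finset.sum_mul]
  refine Finset.sum_le_sum fun i _ => ?_
  have h2 : ‖(colLM B x) i‖ ^ 2 ≤ (‖B i‖ * ‖x‖) ^ 2 := by
    have : (colLM B x) i = B i x := rfl
    rw [this]
    exact pow_le_pow_left₀ (norm_nonneg _) ((B i).le_opNorm x) 2
  calc ‖(colLM B x) i‖ ^ 2 ≤ (‖B i‖ * ‖x‖) ^ 2 := h2
    _ = ‖B i‖ ^ 2 * ‖x‖ ^ 2 := by ring

noncomputable def col (B : Fin m → H →L[ℂ] H) : H →L[ℂ] PiLp 2 (fun _ : Fin m => H) :=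
  LinearMap.mkContinuous (colLM B) _ (col_norm_le B)

@[simp] lemma col_apply (B : Fin m → H →L[ℂ] H) (x : H) (i : Fin m) :
    col B x i = B i x := rfl

lemma col_inner (B : Fin m → H →L[ℂ] H) (x y : H) :
    ⟪col B x, col B y⟫_ℂ = ⟪(∑ i, star (B i) * B i) x, y⟫_ℂ := by
  rw [PiLp.inner_apply, ContinuousLinearMap.sum_apply, sum_inner]
  refine Finset.sum_congr rfl fun i _ => ?_
  have : (star (B i) * B i) x = ContinuousLinearMap.adjoint (B i) (B i x) := rfl
  rw [this, ContinuousLinearMap.adjoint_inner_left]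
  rfl

lemma col_isometry (B : Fin m → H →L[ℂ] H) (hB : ∑ i, star (B i) * B i = 1) :
    Isometry (col B) := by
  refine AddMonoidHomClass.isometry_of_norm _ fun x => ?_
  have key : ⟪col B x, col B x⟫_ℂ = ⟪x, x⟫_ℂ := by
    rw [col_inner, hB]; rfl
  rw [inner_self_eq_norm_sq_to_K, inner_self_eq_norm_sq_to_K] at key
  exact_mod_cast eq_of_sq_eq_sq' (norm_nonneg _) (norm_nonneg _) (by exact_mod_cast key)

lemma col_compress (D B : Fin m → H →L[ℂ] H) :
    ContinuousLinearMap.adjoint (col B) ∘L (bd D ∘L col B) = ∑ i, star (B i) * D i * B i := by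
  ext x
  refine ext_inner_right ℂ fun y => ?_
  rw [ContinuousLinearMap.comp_apply, ContinuousLinearMap.comp_apply,
    ContinuousLinearMap.adjoint_inner_left, PiLp.inner_apply,
    ContinuousLinearMap.sum_apply, sum_inner]
  refine Finset.sum_congr rfl fun i _ => ?_
  have h1 : (bd D ((col B) x)) i = D i (B i x) := rfl
  have h2 : (star (B i) * D i * B i) x = ContinuousLinearMap.adjoint (B i) (D i (B i x)) := rfl
  rw [h1, h2, ContinuousLinearMap.adjoint_inner_left]
  rfl

end Aux

variable {d : ℕ}

/-- sign of a boolean pattern at a coordinate -/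
def sgn (f : Fin d → Bool) (j : Fin d) : ℝ := if f j then 1 else -1

lemma sgn_mul_self (f : Fin d → Bool) (j : Fin d) : sgn f j * sgn f j = 1 := by
  unfold sgn; by_cases h : f j <;> simp [h]

lemma sgn_abs (f : Fin d → Bool) (j : Fin d) : |sgn f j| = 1 := by
  unfold sgn; by_cases h : f j <;> simp [h]

lemma sgn_update_self (f : Fin d → Bool) (j : Fin d) :
    sgn (Function.update f j (!(f j))) j = - sgn f j := by
  unfold sgn; by_cases h : f j <;> simp [h]

lemma sgn_update_ne (f : Fin d → Bool) (j k : Fin d) (h : k ≠ j) :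
    sgn (Function.update f j (!(f j))) k = sgn f k := by
  unfold sgn; rw [Function.update_of_ne h]

/-- the flip involution as an equiv -/
def flipEquiv (j : Fin d) : (Fin d → Bool) ≃ (Fin d → Bool) :=
  Function.Involutive.toPerm (fun f => Function.update f j (!(f j))) (by
    intro f
    funext k
    by_cases h : k = j
    · subst h; simp
    · simp [Function.update_of_ne h])

lemma sum_flip_eq_zero (j : Fin d) (g : (Fin d → Bool) → ℝ)
    (h : ∀ f, g (Function.update f j (!(f j))) = - g f) : ∑ f, g f = 0 := by
  have h1 : ∑ f, g f = ∑ f, g (flipEquiv j f) := (Equiv.sum_comp (flipEquiv j) g).symm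
  have h2 : ∑ f, g (flipEquiv j f) = - ∑ f, g f := by
    rw [← Finset.sum_neg_distrib]
    exact Finset.sum_congr rfl fun f _ => h f
  have := h1.trans h2
  linarith

lemma sum_sgn (j : Fin d) : ∑ f, sgn f j = 0 :=
  sum_flip_eq_zero j _ fun f => sgn_update_self f j

lemma sum_sgn_mul (j k : Fin d) :
    ∑ f, sgn f j * sgn f k = if j = k then (2:ℝ)^d else 0 := by
  by_cases h : j = k
  · subst h
    simp only [if_pos rfl]
    rw [Finset.sum_congr rfl fun f _ => sgn_mul_self f j]
    simp [Finset.card_univ, Fintype.card_fun]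
  · rw [if_neg h]
    refine sum_flip_eq_zero j _ fun f => ?_
    rw [sgn_update_self, sgn_update_ne f j k (fun hh => h hh.symm), neg_mul]
  
lemma sum_sgn_mul₃ (j k l : Fin d) : ∑ f, sgn f j * sgn f k * sgn f l = 0 := by
  by_cases hjk : j = k
  · subst hjk
    calc ∑ f, sgn f j * sgn f j * sgn f l = ∑ f, sgn f l := by
          refine Finset.sum_congr rfl fun f _ => by rw [sgn_mul_self, one_mul]
      _ = 0 := sum_sgn l
  · by_cases hjl : j = l
    · subst hjl
      calc ∑ f, sgn f j * sgn f k * sgn f j = ∑ f, sgn f k := by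
            refine Finset.sum_congr rfl fun f _ => by
              rw [mul_right_comm, sgn_mul_self, one_mul]
        _ = 0 := sum_sgn k
    · by_cases hkl : k = l
      · subst hkl
        calc ∑ f, sgn f j * sgn f k * sgn f k = ∑ f, sgn f j := by
              refine Finset.sum_congr rfl fun f _ => by rw [mul_assoc, sgn_mul_self, mul_one]
          _ = 0 := sum_sgn j
      · refine sum_flip_eq_zero j _ fun f => ?_
        rw [sgn_update_self, sgn_update_ne f j k (fun hh => hjk hh.symm),
          sgn_update_ne f j l (fun hh => hjl hh.symm)]
        ring
variable {d : ℕ}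


section povm
variable {A : Type*} [CStarAlgebra A] [PartialOrder A] [StarOrderedRing A]
variable (a : Fin d → ℝ) (X : Fin d → A)

noncomputable def Yop (j : Fin d) : A := (a j)⁻¹ • X j

noncomputable def Sop (f : Fin d → Bool) : A := ∑ j, sgn f j • Yop a X j

noncomputable def Rop : A := 1 - ∑ j, Yop a X j * Yop a X j

noncomputable def pop (f : Fin d → Bool) : A :=
  (((2:ℝ)^d)⁻¹ * 2⁻¹) • ((1 + Sop a X f) * (1 + Sop a X f) + Rop a X)

lemma Yop_selfAdjoint (hsa : ∀ j, IsSelfAdjoint (X j)) (j : Fin d) :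
    IsSelfAdjoint (Yop a X j) := IsSelfAdjoint.smul (star_trivial _) (hsa j)

lemma Sop_selfAdjoint (hsa : ∀ j, IsSelfAdjoint (X j)) (f : Fin d → Bool) :
    IsSelfAdjoint (Sop a X f) := by
  rw [IsSelfAdjoint, Sop, star_sum]
  exact Finset.sum_congr rfl fun j _ =>
    (IsSelfAdjoint.smul (star_trivial _) (Yop_selfAdjoint a X hsa j)).star_eq

lemma Yop_norm_le (ha : ∀ j, 0 < a j) (hX : ∀ j, ‖X j‖ ≤ 1) (j : Fin d) :
    ‖Yop a X j‖ ≤ (a j)⁻¹ := by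
  rw [Yop, norm_smul]
  calc ‖(a j)⁻¹‖ * ‖X j‖ ≤ ‖(a j)⁻¹‖ * 1 := by gcongr; exact hX j
    _ = (a j)⁻¹ := by rw [mul_one, Real.norm_eq_abs, abs_of_nonneg (inv_nonneg.mpr (ha j).le)]

lemma Rop_nonneg (ha : ∀ j, 0 < a j) (hsum : ∑ j, 1 / (a j) ^ 2 ≤ 1)
    (hsa : ∀ j, IsSelfAdjoint (X j)) (hX : ∀ j, ‖X j‖ ≤ 1) : 0 ≤ Rop a X := by
  rw [Rop, sub_nonneg]
  have h1 : ∀ j, Yop a X j * Yop a X j ≤ algebraMap ℝ A (‖Yop a X j‖^2) := by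
    intro j
    have := CStarAlgebra.star_mul_le_algebraMap_norm_sq (a := Yop a X j) (A := A)
    rwa [(Yop_selfAdjoint a X hsa j).star_eq] at this
  have h2 : ∑ j, Yop a X j * Yop a X j ≤ algebraMap ℝ A (∑ j, ‖Yop a X j‖^2) := by
    rw [map_sum]
    exact Finset.sum_le_sum fun j _ => h1 j
  refine h2.trans ?_
  have h3 : (∑ j, ‖Yop a X j‖^2) ≤ 1 := by
    refine le_trans (Finset.sum_le_sum fun j _ => ?_) hsum
    have := Yop_norm_le a X ha hX j
    calc ‖Yop a X j‖^2 ≤ ((a j)⁻¹)^2 := by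
          exact pow_le_pow_left₀ (norm_nonneg _) this 2
      _ = 1 / (a j)^2 := by rw [one_div, inv_pow]
  calc algebraMap ℝ A (∑ j, ‖Yop a X j‖^2) ≤ algebraMap ℝ A 1 := by
        rw [Algebra.algebraMap_eq_smul_one, Algebra.algebraMap_eq_smul_one]
        have h0 : (0:A) ≤ (1 - ∑ j, ‖Yop a X j‖^2) • (1:A) :=
          smul_nonneg (by linarith) zero_le_one
        have he : (1:ℝ) • (1:A) - (∑ j, ‖Yop a X j‖^2) • 1
            = (1 - ∑ j, ‖Yop a X j‖^2) • 1 := (sub_smul _ _ _).symm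
        exact sub_nonneg.mp (he ▸ h0)
    _ = 1 := map_one _

lemma pop_nonneg (ha : ∀ j, 0 < a j) (hsum : ∑ j, 1 / (a j) ^ 2 ≤ 1)
    (hsa : ∀ j, IsSelfAdjoint (X j)) (hX : ∀ j, ‖X j‖ ≤ 1) (f : Fin d → Bool) :
    0 ≤ pop a X f := by
  refine smul_nonneg (by positivity) (add_nonneg ?_ (Rop_nonneg a X ha hsum hsa hX))
  have hS : IsSelfAdjoint (1 + Sop a X f) :=
    (IsSelfAdjoint.one (R := A)).add (Sop_selfAdjoint a X hsa f)
  have := star_mul_self_nonneg (1 + Sop a X f)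
  rwa [hS.star_eq] at this
lemma sum_sgn_smul_const (j : Fin d) (c : A) : ∑ f, sgn f j • c = 0 := by
  rw [← Finset.sum_smul, sum_sgn, zero_smul]

lemma sum_Sop : ∑ f, Sop a X f = 0 := by
  simp only [Sop]
  rw [Finset.sum_comm]
  refine Finset.sum_eq_zero fun j _ => ?_
  rw [← Finset.sum_smul, sum_sgn, zero_smul]

lemma sum_sgn_smul_Sop (j : Fin d) :
    ∑ f, sgn f j • Sop a X f = (2:ℝ)^d • Yop a X j := by
  simp only [Sop, Finset.smul_sum, smul_smul]
  rw [Finset.sum_comm]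
  have h1 : ∀ k : Fin d, ∑ f, (sgn f j * sgn f k) • Yop a X k
      = (if j = k then (2:ℝ)^d else 0) • Yop a X k := by
    intro k
    rw [← Finset.sum_smul, sum_sgn_mul]
  rw [Finset.sum_congr rfl fun k _ => h1 k]
  simp [Finset.sum_ite_eq]

lemma Sop_mul_Sop (f : Fin d → Bool) :
    Sop a X f * Sop a X f
      = ∑ k, ∑ l, (sgn f k * sgn f l) • (Yop a X k * Yop a X l) := by
  rw [Sop, Finset.sum_mul]
  refine Finset.sum_congr rfl fun k _ => ?_
  rw [Finset.mul_sum]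
  refine Finset.sum_congr rfl fun l _ => ?_
  exact smul_mul_smul_comm _ _ _ _

lemma sum_Sop_mul_Sop :
    ∑ f, Sop a X f * Sop a X f = (2:ℝ)^d • ∑ k, Yop a X k * Yop a X k := by
  rw [Finset.sum_congr rfl fun f _ => Sop_mul_Sop a X f, Finset.sum_comm]
  rw [Finset.smul_sum]
  refine Finset.sum_congr rfl fun k _ => ?_
  rw [Finset.sum_comm]
  have h1 : ∀ l : Fin d, ∑ f, (sgn f k * sgn f l) • (Yop a X k * Yop a X l)
      = (if k = l then (2:ℝ)^d else 0) • (Yop a X k * Yop a X l) := by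
    intro l
    rw [← Finset.sum_smul, sum_sgn_mul]
  rw [Finset.sum_congr rfl fun l _ => h1 l]
  simp [Finset.sum_ite_eq]

lemma sum_sgn_smul_Sop_mul_Sop (j : Fin d) :
    ∑ f, sgn f j • (Sop a X f * Sop a X f) = 0 := by
  have h0 : ∀ f, sgn f j • (Sop a X f * Sop a X f)
      = ∑ k, ∑ l, (sgn f j * (sgn f k * sgn f l)) • (Yop a X k * Yop a X l) := by
    intro f
    rw [Sop_mul_Sop, Finset.smul_sum]
    refine Finset.sum_congr rfl fun k _ => ?_
    rw [Finset.smul_sum]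
    refine Finset.sum_congr rfl fun l _ => ?_
    rw [smul_smul]
  rw [Finset.sum_congr rfl fun f _ => h0 f, Finset.sum_comm]
  refine Finset.sum_eq_zero fun k _ => ?_
  rw [Finset.sum_comm]
  refine Finset.sum_eq_zero fun l _ => ?_
  rw [← Finset.sum_smul]
  have : ∑ f, sgn f j * (sgn f k * sgn f l) = 0 := by
    rw [← sum_sgn_mul₃ j k l]
    exact Finset.sum_congr rfl fun f _ => (mul_assoc _ _ _).symm
  rw [this, zero_smul]

lemma expand_pop (f : Fin d → Bool) :
    (1 + Sop a X f) * (1 + Sop a X f) + Rop a X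
      = (1 + Rop a X) + (Sop a X f + Sop a X f) + Sop a X f * Sop a X f := by
  noncomm_ring

lemma sum_pop : ∑ f, pop a X f = 1 := by
  simp only [pop]
  rw [← Finset.smul_sum]
  rw [Finset.sum_congr rfl fun f _ => expand_pop a X f]
  rw [Finset.sum_add_distrib, Finset.sum_add_distrib, Finset.sum_const,
    Finset.sum_add_distrib, sum_Sop, sum_Sop_mul_Sop, add_zero,
    Finset.card_univ, Fintype.card_fun, Fintype.card_fin, Fintype.card_bool]
  have hcast : (2^d : ℕ) • (1 + Rop a X) = ((2:ℝ)^d) • (1 + Rop a X) := by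
    rw [← Nat.cast_smul_eq_nsmul ℝ]
    norm_num
  rw [add_zero, hcast, ← smul_add, smul_smul]
  have hR : (1 + Rop a X) + ∑ k, Yop a X k * Yop a X k = 1 + 1 := by
    rw [Rop]; abel
  rw [hR, (two_smul ℝ (1:A)).symm, smul_smul]
  have h2 : ((2:ℝ)^d) ≠ 0 := by positivity
  have h3 : ((2:ℝ)^d)⁻¹ * 2⁻¹ * (2^d) * 2 = 1 := by field_simp
  rw [h3, one_smul]

lemma sum_sgn_smul_pop (j : Fin d) : ∑ f, sgn f j • pop a X f = Yop a X j := by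
  simp only [pop]
  have hco : ∀ f : Fin d → Bool, sgn f j • (((2:ℝ)^d)⁻¹ * 2⁻¹) •
      ((1 + Sop a X f) * (1 + Sop a X f) + Rop a X)
      = (((2:ℝ)^d)⁻¹ * 2⁻¹) • (sgn f j •
        ((1 + Rop a X) + (Sop a X f + Sop a X f) + Sop a X f * Sop a X f)) := by
    intro f
    rw [smul_comm, expand_pop]
  rw [Finset.sum_congr rfl fun f _ => hco f, ← Finset.smul_sum]
  have hsp : ∀ f : Fin d → Bool, sgn f j •
      ((1 + Rop a X) + (Sop a X f + Sop a X f) + Sop a X f * Sop a X f)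
      = sgn f j • (1 + Rop a X) + sgn f j • Sop a X f + sgn f j • Sop a X f
        + sgn f j • (Sop a X f * Sop a X f) := by
    intro f
    simp only [smul_add]
    abel
  rw [Finset.sum_congr rfl fun f _ => hsp f, Finset.sum_add_distrib, Finset.sum_add_distrib,
    Finset.sum_add_distrib, sum_sgn_smul_const, sum_sgn_smul_Sop_mul_Sop, sum_sgn_smul_Sop,
    add_zero, zero_add]
  have hcomb : ((2:ℝ)^d) • Yop a X j + ((2:ℝ)^d) • Yop a X j
      = (((2:ℝ)^d) + ((2:ℝ)^d)) • Yop a X j := (add_smul _ _ _).symm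
  rw [hcomb, smul_smul]
  have h2 : ((2:ℝ)^d) ≠ 0 := by positivity
  have h3 : ((2:ℝ)^d)⁻¹ * 2⁻¹ * ((2:ℝ)^d + (2:ℝ)^d) = 1 := by field_simp; ring
  rw [h3, one_smul]

lemma sum_weighted_pop (j : Fin d) (haj : a j ≠ 0) :
    ∑ f, (a j * sgn f j) • pop a X f = X j := by
  have h1 : ∀ f : Fin d → Bool, (a j * sgn f j) • pop a X f
      = a j • (sgn f j • pop a X f) := fun f => by rw [smul_smul]
  rw [Finset.sum_congr rfl fun f _ => h1 f, ← Finset.smul_sum, sum_sgn_smul_pop, Yop,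
    smul_smul, mul_inv_cancel₀ haj, one_smul]

end povm

open ContinuousLinearMap in
/-- **Sharp dilation for the cube.**
Let `a 1, …, a d > 0` with `∑ 1/a j² ≤ 1`.  Then every `d`-tuple of self-adjoint
contractions `X 1, …, X d` on a Hilbert space `H` dilates to a commuting tuple of
self-adjoint operators `N 1, …, N d` on `H ⊗ ℂ^(4^(d-1))` with `‖N j‖ ≤ a j`:
there is an isometry `V` with `X j = V* ∘ N j ∘ V` for all `j`. -/
theorem cube_dilation
    {H : Type*} [NormedAddCommGroup H] [InnerProductSpace ℂ H] [CompleteSpace H]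
    {d : ℕ} (a : Fin d → ℝ) (ha : ∀ j, 0 < a j)
    (hsum : ∑ j, 1 / (a j) ^ 2 ≤ 1)
    (X : Fin d → H →L[ℂ] H)
    (hsa : ∀ j, IsSelfAdjoint (X j))
    (hX : ∀ j, ‖X j‖ ≤ 1) :
    ∃ (N : Fin d →
        (PiLp 2 (fun _ : Fin (4 ^ (d - 1)) => H) →L[ℂ] PiLp 2 (fun _ : Fin (4 ^ (d - 1)) => H)))
      (V : H →L[ℂ] PiLp 2 (fun _ : Fin (4 ^ (d - 1)) => H)),
      (∀ i j, Commute (N i) (N j)) ∧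
      (∀ j, IsSelfAdjoint (N j)) ∧
      (∀ j, ‖N j‖ ≤ a j) ∧
      Isometry V ∧
      (∀ j, X j = ContinuousLinearMap.adjoint V ∘L N j ∘L V) := by
  classical
  have one_le_a : ∀ j, 1 ≤ a j := by
    intro j
    have h1 : 1 / (a j) ^ 2 ≤ 1 := by
      refine le_trans ?_ hsum
      exact Finset.single_le_sum (f := fun j => 1 / (a j)^2)
        (fun k _ => by positivity) (Finset.mem_univ j)
    have h2 : 1 ≤ (a j)^2 := by
      rw [div_le_one (pow_pos (ha j) 2)] at h1
      exact h1
    nlinarith [ha j]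
  by_cases hd : d ≤ 1
  · -- small case : all operators trivially commute since `Fin d` is a subsingleton
    have hm : (4:ℕ) ^ (d-1) = 1 := by
      have h0 : d - 1 = 0 := by omega
      rw [h0, pow_zero]
    have hB : ∑ i : Fin (4 ^ (d-1)), star (1 : H →L[ℂ] H) * 1 = 1 := by
      simp only [star_one, one_mul]
      rw [Finset.sum_const, Finset.card_univ, Fintype.card_fin, hm, one_smul]
    refine ⟨fun j => bd (fun _ => X j), col (fun _ => 1), ?_, ?_, ?_, ?_, ?_⟩
    · intro i j
      have hij : i = j := by
        apply Fin.ext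
        omega
      subst hij
      exact Commute.refl _
    · exact fun j => bd_isSelfAdjoint _ (fun _ => hsa j)
    · exact fun j => bd_opNorm_le _ (ha j).le (fun _ => (hX j).trans (one_le_a j))
    · exact col_isometry _ hB
    · intro j
      rw [col_compress]
      simp only [star_one, one_mul, mul_one]
      rw [Finset.sum_const, Finset.card_univ, Fintype.card_fin, hm, one_smul]
  · -- main case `d ≥ 2`
    push_neg at hd
    have hcard : Fintype.card (Fin d → Bool) ≤ Fintype.card (Fin (4 ^ (d-1))) := by
      rw [Fintype.card_fun, Fintype.card_fin, Fintype.card_bool, Fintype.card_fin]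
      have h4 : (4:ℕ) ^ (d-1) = 2 ^ (2*(d-1)) := by
        rw [pow_mul]
        norm_num
      rw [h4]
      exact Nat.pow_le_pow_right (by norm_num) (by omega)
    obtain ⟨e⟩ : Nonempty ((Fin d → Bool) ↪ Fin (4 ^ (d-1))) :=
      Function.Embedding.nonempty_of_card_le hcard
    set B : Fin (4 ^ (d-1)) → H →L[ℂ] H :=
      fun i => if h : ∃ f, e f = i then CFC.sqrt (pop a X h.choose) else 0 with hBdef
    set ε : Fin (4 ^ (d-1)) → Fin d → ℝ :=
      fun i j => if h : ∃ f, e f = i then sgn h.choose j else 1 with hεdef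
    have hBe : ∀ f, B (e f) = CFC.sqrt (pop a X f) := by
      intro f
      have h : ∃ f', e f' = e f := ⟨f, rfl⟩
      have hch : h.choose = f := e.injective h.choose_spec
      simp only [hBdef, dif_pos h, hch]
    have hεe : ∀ f j, ε (e f) j = sgn f j := by
      intro f j
      have h : ∃ f', e f' = e f := ⟨f, rfl⟩
      have hch : h.choose = f := e.injective h.choose_spec
      simp only [hεdef, dif_pos h, hch]
    have hB0 : ∀ i, (¬ ∃ f, e f = i) → B i = 0 := fun i h => dif_neg h
    have hεabs : ∀ i j, |ε i j| = 1 := by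
      intro i j
      by_cases h : ∃ f, e f = i
      · simp only [hεdef, dif_pos h]
        exact sgn_abs _ _
      · simp only [hεdef, dif_neg h, abs_one]
    have transfer : ∀ (G : Fin (4 ^ (d-1)) → H →L[ℂ] H),
        (∀ i, (¬ ∃ f, e f = i) → G i = 0) → ∑ i, G i = ∑ f, G (e f) := by
      intro G hG
      have h1 : ∑ i ∈ Finset.univ.map e, G i = ∑ i, G i := by
        refine Finset.sum_subset (Finset.subset_univ _) ?_
        intro i _ hi
        refine hG i fun ⟨f, hf⟩ => hi ?_
        rw [Finset.mem_map]
        exact ⟨f, Finset.mem_univ f, hf⟩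
      rw [← h1, Finset.sum_map]
    have hpop_nonneg : ∀ f, (0:H →L[ℂ] H) ≤ pop a X f :=
      fun f => pop_nonneg a X ha hsum hsa hX f
    have hBB : ∀ f, star (B (e f)) * B (e f) = pop a X f := by
      intro f
      rw [hBe f]
      have hsq : IsSelfAdjoint (CFC.sqrt (pop a X f)) :=
        IsSelfAdjoint.of_nonneg (CFC.sqrt_nonneg (a := pop a X f))
      rw [hsq.star_eq, ← sq, CFC.sq_sqrt _ (hpop_nonneg f)]
    have hB1 : ∑ i, star (B i) * B i = 1 := by
      rw [transfer _ (fun i h => by rw [hB0 i h, star_zero, zero_mul])]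
      rw [Finset.sum_congr rfl fun f _ => hBB f]
      exact sum_pop a X
    refine ⟨fun j => bd (fun i => (a j * ε i j) • 1), col B, ?_, ?_, ?_, ?_, ?_⟩
    · intro j k
      rw [Commute, SemiconjBy, bd_mul, bd_mul]
      congr 1
      funext i
      rw [smul_mul_smul_comm, smul_mul_smul_comm, one_mul, mul_comm (a j * ε i j)]
    · intro j
      refine bd_isSelfAdjoint _ fun i => ?_
      exact IsSelfAdjoint.smul (star_trivial _) (IsSelfAdjoint.one (R := H →L[ℂ] H))
    · intro j
      refine bd_opNorm_le _ (ha j).le fun i => ?_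
      rw [norm_smul]
      calc ‖a j * ε i j‖ * ‖(1 : H →L[ℂ] H)‖ ≤ ‖a j * ε i j‖ * 1 := by
            gcongr
            rw [ContinuousLinearMap.one_def]
            exact ContinuousLinearMap.norm_id_le
        _ = |a j| * |ε i j| := by rw [mul_one, Real.norm_eq_abs, abs_mul]
        _ = a j := by rw [hεabs, mul_one, abs_of_pos (ha j)]
    · exact col_isometry _ hB1
    · intro j
      rw [col_compress]
      have hterm : ∀ i, star (B i) * ((a j * ε i j) • 1) * B i
          = (a j * ε i j) • (star (B i) * B i) := by
        intro i
        rw [mul_smul_comm, mul_one, smul_mul_assoc]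
      rw [Finset.sum_congr rfl fun i _ => hterm i]
      rw [transfer _ (fun i h => by rw [hB0 i h, star_zero, zero_mul, smul_zero])]
      have : ∑ f, (a j * ε (e f) j) • (star (B (e f)) * B (e f))
          = ∑ f, (a j * sgn f j) • pop a X f := by
        refine Finset.sum_congr rfl fun f _ => ?_
        rw [hεe, hBB]
      rw [this, sum_weighted_pop a X j (ha j).ne']
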